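/- For every integer n ≥ 2, there exists an extended 1-perfect trade of length n if and only if n is even. -/

import Mathlib

open Finset Function


/-- An extended 1-perfect trade of length `n`. -/
def IsExtTrade {n : ℕ} (T₀ T₁ : Finset (Fin n → ZMod 2)) : Prop :=
  T₀.Nonempty ∧ T₁.Nonempty ∧ Disjoint T₀ T₁ ∧
  (∀ x ∈ T₀ ∪ T₁, Even (hammingNorm x)) ∧
  ∀ x : Fin n → ZMod 2, Odd (hammingNorm x) →
    (T₀.filter fun y => hammingDist x y = 1).card =
      (T₁.filter fun y => hammingDist x y = 1).card ∧
    (T₀.filter fun y => hammingDist x y = 1).card ≤ 1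

/- ### Auxiliary lemmas -/

lemma odd_iff_cast (k : ℕ) : Odd k ↔ (k : ZMod 2) = 1 := by
  rw [Nat.odd_iff, ← ZMod.natCast_mod k 2]
  rcases Nat.mod_two_eq_zero_or_one k with h | h <;> rw [h] <;> simp

lemma even_iff_cast (k : ℕ) : Even k ↔ (k : ZMod 2) = 0 := by
  rw [Nat.even_iff, ← ZMod.natCast_mod k 2]
  rcases Nat.mod_two_eq_zero_or_one k with h | h <;> rw [h] <;> simp

lemma cast_hammingNorm {ι : Type*} [Fintype ι] (x : ι → ZMod 2) :
    (hammingNorm x : ZMod 2) = ∑ i, x i := by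
  classical
  rw [hammingNorm, Finset.card_filter]
  push_cast
  refine Finset.sum_congr rfl fun i _ => ?_
  have h : ∀ a : ZMod 2, (if a ≠ 0 then (1 : ZMod 2) else 0) = a := by decide
  exact h (x i)

lemma hammingNorm_comp_equiv {ι κ : Type*} [Fintype ι] [Fintype κ]
    (e : κ ≃ ι) (x : ι → ZMod 2) :
    hammingNorm (x ∘ e) = hammingNorm x := by
  classical
  rw [hammingNorm, hammingNorm, ← Fintype.card_subtype, ← Fintype.card_subtype]
  exact Fintype.card_congr (e.subtypeEquiv fun k => Iff.rfl)

lemma hammingDist_comp_equiv {ι κ : Type*} [Fintype ι] [Fintype κ]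
    (e : κ ≃ ι) (x y : ι → ZMod 2) :
    hammingDist (x ∘ e) (y ∘ e) = hammingDist x y := by
  classical
  rw [hammingDist, hammingDist, ← Fintype.card_subtype, ← Fintype.card_subtype]
  exact Fintype.card_congr (e.subtypeEquiv fun k => Iff.rfl)

lemma zmod2_add_one_ne : ∀ a : ZMod 2, a + 1 ≠ a := by decide

lemma zmod2_ne_iff {a b : ZMod 2} (h : a ≠ b) : a = b + 1 := by revert a b; decide

lemma sphere_card {ι : Type*} [Fintype ι] [DecidableEq ι] (y : ι → ZMod 2) :
    (univ.filter fun z => hammingDist z y = 1).card = Fintype.card ι := by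
  have hinj : Injective (fun i : ι => Function.update y i (y i + 1)) := by
    intro i j h
    by_contra hij
    have := congrFun h i
    simp only [update_self, update_of_ne hij] at this
    exact zmod2_add_one_ne _ this
  have key : (univ.filter fun z => hammingDist z y = 1)
      = univ.image (fun i => Function.update y i (y i + 1)) := by
    ext z
    simp only [mem_filter, mem_univ, true_and, mem_image]
    constructor
    · intro hz
      rw [hammingDist] at hz
      obtain ⟨i, hi⟩ := Finset.card_eq_one.mp hz
      refine ⟨i, ?_⟩
      funext j
      rcases eq_or_ne j i with rfl | hji
      · have : j ∈ ({i | z i ≠ y i} : Finset ι) := by rw [hi]; exact mem_singleton_self j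
        simp only [mem_filter, mem_univ, true_and] at this
        simp [update_self, (zmod2_ne_iff this).symm]
      · have : j ∉ ({i | z i ≠ y i} : Finset ι) := by rw [hi]; simpa using hji
        simp only [mem_filter, mem_univ, true_and, not_not] at this
        simp [update_of_ne hji, this]
    · rintro ⟨i, rfl⟩
      rw [hammingDist]
      have : ({j | Function.update y i (y i + 1) j ≠ y j} : Finset ι) = {i} := by
        ext j
        simp only [mem_filter, mem_univ, true_and, mem_singleton]
        rcases eq_or_ne j i with rfl | hji
        · simp [update_self, zmod2_add_one_ne]
        · simp [update_of_ne hji, hji]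
      rw [this, card_singleton]
  rw [key, Finset.card_image_of_injective _ hinj, card_univ]

/- ### Construction for even length -/

section EvenConstruction

variable {m : ℕ}

def pw (s : Fin m → ZMod 2) : Fin m × Bool → ZMod 2 := fun p => s p.1

lemma dist_pw (x : Fin m × Bool → ZMod 2) (s : Fin m → ZMod 2) :
    hammingDist x (pw s) =
      ∑ k, ((if x (k, true) ≠ s k then 1 else 0) + (if x (k, false) ≠ s k then 1 else 0)) := by
  rw [hammingDist, Finset.card_filter, Fintype.sum_prod_type]
  refine Finset.sum_congr rfl fun k _ => ?_
  rw [Fintype.sum_bool]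
  rfl

lemma zmod2_pair_ne {a b : ZMod 2} (h : a ≠ b) (c : ZMod 2) :
    ((if a ≠ c then 1 else 0) + (if b ≠ c then 1 else 0) : ℕ) = 1 := by
  revert a b c; decide

lemma zmod2_pair_eq {a b : ZMod 2} (h : a = b) (c : ZMod 2) :
    ((if a ≠ c then 1 else 0) + (if b ≠ c then 1 else 0) : ℕ) = if c = a then 0 else 2 := by
  revert a b c; decide

lemma pw_count (x : Fin m × Bool → ZMod 2) (hx : Odd (hammingNorm x)) :
    ((univ.filter fun s : Fin m → ZMod 2 =>
        Even (hammingNorm s) ∧ hammingDist x (pw s) = 1).card =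
      (univ.filter fun s : Fin m → ZMod 2 =>
        Odd (hammingNorm s) ∧ hammingDist x (pw s) = 1).card) ∧
    (univ.filter fun s : Fin m → ZMod 2 =>
        Even (hammingNorm s) ∧ hammingDist x (pw s) = 1).card ≤ 1 := by
  classical
  set D : Finset (Fin m) := univ.filter fun k => x (k, true) ≠ x (k, false) with hD
  have hDcast : ((D.card : ZMod 2)) = 1 := by
    rw [hD, Finset.card_filter]
    push_cast
    have step1 : ∑ k : Fin m, (if x (k, true) ≠ x (k, false) then (1 : ZMod 2) else 0)
        = ∑ k : Fin m, (x (k, true) + x (k, false)) := by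
      refine Finset.sum_congr rfl fun k _ => ?_
      have h : ∀ a b : ZMod 2, (if a ≠ b then (1 : ZMod 2) else 0) = a + b := by decide
      exact h _ _
    rw [step1]
    have step2 : ∑ k : Fin m, (x (k, true) + x (k, false)) = ∑ p : Fin m × Bool, x p := by
      rw [Fintype.sum_prod_type]
      exact Finset.sum_congr rfl fun k _ => (Fintype.sum_bool (fun b => x (k, b))).symm
    rw [step2, ← cast_hammingNorm, ← odd_iff_cast] at *
    exact hx
  have hDne : D.Nonempty := by
    rw [Finset.nonempty_iff_ne_empty]
    intro h
    rw [h] at hDcast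
    simp at hDcast
  obtain ⟨k₀, hk₀⟩ := hDne
  by_cases hbig : ∃ k₁ ∈ D, k₁ ≠ k₀
  · -- at least two bad pairs: both filters empty
    obtain ⟨k₁, hk₁, hne⟩ := hbig
    have hno : ∀ s : Fin m → ZMod 2, hammingDist x (pw s) ≠ 1 := by
      intro s h1
      have h2 : 2 ≤ hammingDist x (pw s) := by
        rw [dist_pw]
        have : ∑ k ∈ ({k₀, k₁} : Finset (Fin m)),
            ((if x (k, true) ≠ s k then 1 else 0) + (if x (k, false) ≠ s k then 1 else 0)) = 2 := by
          rw [Finset.sum_pair (Ne.symm hne)]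
          rw [zmod2_pair_ne (Finset.mem_filter.mp hk₀).2, zmod2_pair_ne (Finset.mem_filter.mp hk₁).2]
        have hle := Finset.sum_le_sum_of_subset (f := fun k =>
          ((if x (k, true) ≠ s k then 1 else 0) + (if x (k, false) ≠ s k then 1 else 0)))
          (Finset.subset_univ ({k₀, k₁} : Finset (Fin m)))
        rw [this] at hle
        exact hle
      omega
    have e0 : (univ.filter fun s : Fin m → ZMod 2 =>
        Even (hammingNorm s) ∧ hammingDist x (pw s) = 1) = ∅ :=
      Finset.filter_eq_empty_iff.mpr fun s _ h => hno s h.2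
    have e1 : (univ.filter fun s : Fin m → ZMod 2 =>
        Odd (hammingNorm s) ∧ hammingDist x (pw s) = 1) = ∅ :=
      Finset.filter_eq_empty_iff.mpr fun s _ h => hno s h.2
    rw [e0, e1]
    simp
  · -- exactly one bad pair k₀
    push_neg at hbig
    have hk0ne : x (k₀, true) ≠ x (k₀, false) := (Finset.mem_filter.mp hk₀).2
    have hoth : ∀ k, k ≠ k₀ → x (k, true) = x (k, false) := by
      intro k hk
      by_contra h
      exact hk (hbig k (Finset.mem_filter.mpr ⟨Finset.mem_univ _, h⟩))
    set x' : Fin m → ZMod 2 := fun k => x (k, true) with hx'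
    have hdist : ∀ s : Fin m → ZMod 2,
        hammingDist x (pw s) = 1 ↔ ∀ k, k ≠ k₀ → s k = x' k := by
      intro s
      rw [dist_pw, ← Finset.add_sum_erase _ _ (Finset.mem_univ k₀),
        zmod2_pair_ne hk0ne]
      have hrw : ∑ k ∈ univ.erase k₀,
          ((if x (k, true) ≠ s k then 1 else 0) + (if x (k, false) ≠ s k then 1 else 0))
          = ∑ k ∈ univ.erase k₀, (if s k = x' k then 0 else 2) := by
        refine Finset.sum_congr rfl fun k hk => ?_
        exact zmod2_pair_eq (hoth k (Finset.ne_of_mem_erase hk)) (s k)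
      rw [hrw]
      constructor
      · intro h k hk
        have hz : ∑ k ∈ univ.erase k₀, (if s k = x' k then 0 else 2) = 0 := by omega
        have := (Finset.sum_eq_zero_iff.mp hz) k (Finset.mem_erase.mpr ⟨hk, Finset.mem_univ _⟩)
        by_contra hc
        rw [if_neg hc] at this
        omega
      · intro h
        have hz : ∑ k ∈ univ.erase k₀, (if s k = x' k then 0 else 2) = 0 := by
          refine Finset.sum_eq_zero fun k hk => ?_
          rw [if_pos (h k (Finset.ne_of_mem_erase hk))]
        omega
    set u₀ : Fin m → ZMod 2 := Function.update x' k₀ 0 with hu₀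
    set u₁ : Fin m → ZMod 2 := Function.update x' k₀ 1 with hu₁
    have hsol : ∀ s : Fin m → ZMod 2, (∀ k, k ≠ k₀ → s k = x' k) ↔ s = u₀ ∨ s = u₁ := by
      intro s
      constructor
      · intro h
        have hs : s = Function.update x' k₀ (s k₀) := by
          funext k
          rcases eq_or_ne k k₀ with rfl | hk
          · simp
          · simp [Function.update_of_ne hk, h k hk]
        have h01 : s k₀ = 0 ∨ s k₀ = 1 := by
          have : ∀ a : ZMod 2, a = 0 ∨ a = 1 := by decide
          exact this _
        rcases h01 with h0 | h1
        · left; rw [hs, h0]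
        · right; rw [hs, h1]
      · rintro (rfl | rfl) k hk <;> simp [hu₀, hu₁, Function.update_of_ne hk]
    have hwt : hammingNorm u₁ = hammingNorm u₀ + 1 := by
      rw [hammingNorm, hammingNorm]
      have hset : (univ.filter fun k => u₁ k ≠ 0)
          = insert k₀ (univ.filter fun k => u₀ k ≠ 0) := by
        ext k
        simp only [Finset.mem_filter, Finset.mem_univ, true_and, Finset.mem_insert]
        rcases eq_or_ne k k₀ with rfl | hk
        · have e1 : u₁ k = 1 := by rw [hu₁]; simp
          have e0 : u₀ k = 0 := by rw [hu₀]; simp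
          simp [e1, e0]
        · have e1 : u₁ k = x' k := by rw [hu₁]; simp [Function.update_of_ne hk]
          have e0 : u₀ k = x' k := by rw [hu₀]; simp [Function.update_of_ne hk]
          simp [e1, e0, hk]
      show (univ.filter fun k => u₁ k ≠ 0).card = (univ.filter fun k => u₀ k ≠ 0).card + 1
      rw [hset, Finset.card_insert_of_notMem (by simp [hu₀])]
    by_cases he : Even (hammingNorm u₀)
    · have ho : Odd (hammingNorm u₁) := by rw [hwt]; exact Even.add_one he
      have f0 : (univ.filter fun s : Fin m → ZMod 2 =>
          Even (hammingNorm s) ∧ hammingDist x (pw s) = 1) = {u₀} := by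
        ext s
        simp only [Finset.mem_filter, Finset.mem_univ, true_and, Finset.mem_singleton,
          hdist, hsol]
        constructor
        · rintro ⟨hev, (rfl | rfl)⟩
          · rfl
          · exact absurd hev (Nat.not_even_iff_odd.mpr ho)
        · rintro rfl
          exact ⟨he, Or.inl rfl⟩
      have f1 : (univ.filter fun s : Fin m → ZMod 2 =>
          Odd (hammingNorm s) ∧ hammingDist x (pw s) = 1) = {u₁} := by
        ext s
        simp only [Finset.mem_filter, Finset.mem_univ, true_and, Finset.mem_singleton,
          hdist, hsol]
        constructor
        · rintro ⟨hod, (rfl | rfl)⟩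
          · exact absurd he (Nat.not_even_iff_odd.mpr hod)
          · rfl
        · rintro rfl
          exact ⟨ho, Or.inr rfl⟩
      rw [f0, f1]
      simp
    · have ho : Odd (hammingNorm u₀) := Nat.not_even_iff_odd.mp he
      have he1 : Even (hammingNorm u₁) := by rw [hwt]; exact Odd.add_one ho
      have f0 : (univ.filter fun s : Fin m → ZMod 2 =>
          Even (hammingNorm s) ∧ hammingDist x (pw s) = 1) = {u₁} := by
        ext s
        simp only [Finset.mem_filter, Finset.mem_univ, true_and, Finset.mem_singleton,
          hdist, hsol]
        constructor
        · rintro ⟨hev, (rfl | rfl)⟩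
          · exact absurd hev he
          · rfl
        · rintro rfl
          exact ⟨he1, Or.inr rfl⟩
      have f1 : (univ.filter fun s : Fin m → ZMod 2 =>
          Odd (hammingNorm s) ∧ hammingDist x (pw s) = 1) = {u₀} := by
        ext s
        simp only [Finset.mem_filter, Finset.mem_univ, true_and, Finset.mem_singleton,
          hdist, hsol]
        constructor
        · rintro ⟨hod, (rfl | rfl)⟩
          · rfl
          · exact absurd he1 (Nat.not_even_iff_odd.mpr hod)
        · rintro rfl
          exact ⟨ho, Or.inl rfl⟩
      rw [f0, f1]
      simp

end EvenConstruction

/- ### Main theorem -/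

/-- for n ≥ 2, an extended 1-perfect trade of length n exists iff
n is even. -/
theorem stmt_15 (n : ℕ) (hn : 2 ≤ n) :
    (∃ T₀ T₁ : Finset (Fin n → ZMod 2), IsExtTrade T₀ T₁) ↔ Even n := by
  constructor
  · rintro ⟨T₀, T₁, ⟨⟨y, hy⟩, hT1ne, hdisj, hev, hmain⟩⟩
    -- the sum of coordinates of y is 0
    have hyev : (∑ i, y i) = 0 := by
      rw [← cast_hammingNorm, ← even_iff_cast]
      exact hev y (Finset.mem_union_left _ hy)
    have podd : ∀ z : Fin n → ZMod 2, hammingDist z y = 1 → Odd (hammingNorm z) := by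
      intro z hz
      rw [odd_iff_cast, cast_hammingNorm]
      have h1 : ((hammingDist z y : ℕ) : ZMod 2) = ∑ i, z i - ∑ i, y i := by
        rw [hammingDist_comm, hammingDist_eq_hammingNorm, neg_add_eq_sub, cast_hammingNorm, ← Finset.sum_sub_distrib]
        rfl
      rw [hz, hyev, sub_zero] at h1
      exact h1.symm
    set S : Finset (Fin n → ZMod 2) := univ.filter fun z => hammingDist z y = 1 with hS
    have hScard : S.card = n := by rw [hS, sphere_card, Fintype.card_fin]
    set Q : Finset ((Fin n → ZMod 2) × (Fin n → ZMod 2)) :=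
      (S ×ˢ T₁).filter fun p => hammingDist p.1 p.2 = 1 with hQ
    have hQmemS : ∀ p ∈ Q, p.1 ∈ S := fun p hp =>
      (Finset.mem_product.mp (Finset.mem_filter.mp hp).1).1
    have hQmemT : ∀ p ∈ Q, p.2 ∈ T₁ := fun p hp =>
      (Finset.mem_product.mp (Finset.mem_filter.mp hp).1).2
    have hQ1 : Q.card = n := by
      rw [Finset.card_eq_sum_card_fiberwise hQmemS]
      have hone : ∀ z ∈ S, (Q.filter fun p => p.1 = z).card = 1 := by
        intro z hz
        have hzS : hammingDist z y = 1 := (Finset.mem_filter.mp hz).2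
        have hcard : (Q.filter fun p => p.1 = z).card
            = (T₁.filter fun y' => hammingDist z y' = 1).card := by
          apply Finset.card_bij (fun p _ => p.2)
          · intro p hp
            simp only [Finset.mem_filter] at hp
            obtain ⟨hpQ, h4⟩ := hp
            refine Finset.mem_filter.mpr ⟨hQmemT p hpQ, ?_⟩
            rw [← h4]
            exact (Finset.mem_filter.mp hpQ).2
          · intro p hp q hq hpq
            simp only [Finset.mem_filter] at hp hq
            exact Prod.ext (hp.2.trans hq.2.symm) hpq
          · intro y' hy'
            simp only [Finset.mem_filter] at hy'
            refine ⟨(z, y'), Finset.mem_filter.mpr ⟨Finset.mem_filter.mpr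
              ⟨Finset.mem_product.mpr ⟨hz, hy'.1⟩, hy'.2⟩, rfl⟩, rfl⟩
        rw [hcard]
        obtain ⟨heq, hle⟩ := hmain z (podd z hzS)
        have hge : 1 ≤ (T₀.filter fun y' => hammingDist z y' = 1).card :=
          Finset.card_pos.mpr ⟨y, Finset.mem_filter.mpr ⟨hy, hzS⟩⟩
        omega
      rw [Finset.sum_congr rfl hone, Finset.sum_const, smul_eq_mul, mul_one, hScard]
    have hyne : ∀ y' ∈ T₁, y ≠ y' := by
      intro y' hy' h
      exact (Finset.disjoint_left.mp hdisj hy) (h ▸ hy')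
    have hQ2 : ((Q.card : ℕ) : ZMod 2) = 0 := by
      rw [Finset.card_eq_sum_card_fiberwise hQmemT]
      push_cast
      refine Finset.sum_eq_zero fun y' hy' => ?_
      set F : Finset ((Fin n → ZMod 2) × (Fin n → ZMod 2)) :=
        Q.filter fun p => p.2 = y' with hF
      have hFmem : ∀ p ∈ F, p.1 ∈ S ∧ p.2 ∈ T₁ ∧ hammingDist p.1 p.2 = 1 ∧ p.2 = y' := by
        intro p hp
        obtain ⟨hpQ, h4⟩ := Finset.mem_filter.mp hp
        exact ⟨hQmemS p hpQ, hQmemT p hpQ, (Finset.mem_filter.mp hpQ).2, h4⟩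
      have hadd : ∀ v : Fin n → ZMod 2, v + v = 0 := by
        intro v; funext i
        have : ∀ a : ZMod 2, a + a = 0 := by decide
        exact this _
      have hinv : ∑ _p ∈ F, (1 : ZMod 2) = 0 := by
        apply Finset.sum_involution (g := fun p _ => ((y + p.2 - p.1 : Fin n → ZMod 2), p.2))
        · intro a ha; decide
        · intro p hp _ h
          obtain ⟨h1, h2, h3, h4⟩ := hFmem p hp
          have h5 : y + p.2 - p.1 = p.1 := congrArg Prod.fst h
          have h6 : y + p.2 = p.1 + p.1 := sub_eq_iff_eq_add.mp h5
          rw [hadd p.1] at h6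
          have h7 : y = p.2 := by
            have := congrArg (fun v => v + p.2) h6
            simpa [add_assoc, hadd p.2] using this
          exact hyne p.2 h2 h7
        · intro p hp
          obtain ⟨h1, h2, h3, h4⟩ := hFmem p hp
          have hd1 : hammingDist (y + p.2 - p.1) y = 1 := by
            rw [hammingDist_comm, hammingDist_eq_hammingNorm, neg_add_eq_sub]
            have : y + p.2 - p.1 - y = p.2 - p.1 := by abel
            rw [this, ← neg_add_eq_sub, ← hammingDist_eq_hammingNorm]
            exact h3
          have hd2 : hammingDist (y + p.2 - p.1) p.2 = 1 := by
            rw [hammingDist_comm, hammingDist_eq_hammingNorm, neg_add_eq_sub]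
            have : y + p.2 - p.1 - p.2 = y - p.1 := by abel
            rw [this, ← neg_add_eq_sub, ← hammingDist_eq_hammingNorm]
            exact (Finset.mem_filter.mp h1).2
          refine Finset.mem_filter.mpr ⟨Finset.mem_filter.mpr
            ⟨Finset.mem_product.mpr ⟨?_, h2⟩, hd2⟩, h4⟩
          exact Finset.mem_filter.mpr ⟨Finset.mem_univ _, hd1⟩
        · intro p hp
          have : y + p.2 - (y + p.2 - p.1) = p.1 := by abel
          exact Prod.ext this rfl
      rw [Finset.sum_const, nsmul_eq_mul, mul_one] at hinv
      exact hinv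
    rw [even_iff_cast, ← hQ1]
    exact hQ2
  · rintro ⟨m, rfl⟩
    have hm : 0 < m := by omega
    classical
    let e : Fin (m + m) ≃ Fin m × Bool :=
      ((finCongr (by ring : m + m = m * 2)).trans finProdFinEquiv.symm).trans
        ((Equiv.refl (Fin m)).prodCongr finTwoEquiv)
    set g : (Fin m → ZMod 2) → (Fin (m + m) → ZMod 2) := fun s => pw s ∘ e with hg
    have hginj : Function.Injective g := by
      intro s t h
      funext k
      have := congrFun h (e.symm (k, true))
      simpa [hg, pw] using this
    refine ⟨(univ.filter fun s : Fin m → ZMod 2 => Even (hammingNorm s)).image g,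
      (univ.filter fun s : Fin m → ZMod 2 => Odd (hammingNorm s)).image g,
      ⟨g 0, ?_⟩, ⟨g (Function.update (0 : Fin m → ZMod 2) ⟨0, hm⟩ 1), ?_⟩, ?_, ?_, ?_⟩
    · refine Finset.mem_image_of_mem g (Finset.mem_filter.mpr ⟨Finset.mem_univ _, ?_⟩)
      rw [hammingNorm_zero]
      exact Even.zero
    · refine Finset.mem_image_of_mem g (Finset.mem_filter.mpr ⟨Finset.mem_univ _, ?_⟩)
      have : hammingNorm (Function.update (0 : Fin m → ZMod 2) ⟨0, hm⟩ 1) = 1 := by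
        rw [hammingNorm]
        have hs : (univ.filter fun k =>
            Function.update (0 : Fin m → ZMod 2) ⟨0, hm⟩ 1 k ≠ 0) = {⟨0, hm⟩} := by
          ext k
          simp only [Finset.mem_filter, Finset.mem_univ, true_and, Finset.mem_singleton]
          rcases eq_or_ne k ⟨0, hm⟩ with rfl | hk
          · simp
          · simp [Function.update_of_ne hk, hk]
        rw [hs, card_singleton]
      rw [this]
      exact odd_one
    · rw [Finset.disjoint_left]
      rintro a ha₀ ha₁
      obtain ⟨s, hs, rfl⟩ := Finset.mem_image.mp ha₀
      obtain ⟨t, ht, hts⟩ := Finset.mem_image.mp ha₁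
      have : t = s := hginj hts
      rw [this] at ht
      exact (Nat.not_even_iff_odd.mpr (Finset.mem_filter.mp ht).2) (Finset.mem_filter.mp hs).2
    · intro x hx
      have : ∃ s, g s = x := by
        rcases Finset.mem_union.mp hx with h | h
        · obtain ⟨s, _, hsx⟩ := Finset.mem_image.mp h; exact ⟨s, hsx⟩
        · obtain ⟨s, _, hsx⟩ := Finset.mem_image.mp h; exact ⟨s, hsx⟩
      obtain ⟨s, rfl⟩ := this
      have h1 : hammingNorm (g s) = hammingNorm (pw s) := hammingNorm_comp_equiv e (pw s)
      rw [h1, even_iff_cast, cast_hammingNorm, Fintype.sum_prod_type]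
      have : ∀ k : Fin m, ∑ b : Bool, pw s (k, b) = 0 := by
        intro k
        rw [Fintype.sum_bool]
        show s k + s k = 0
        have : ∀ a : ZMod 2, a + a = 0 := by decide
        exact this _
      rw [Finset.sum_congr rfl fun k _ => this k, Finset.sum_const, smul_zero]
    · intro x hx
      have hxe : Odd (hammingNorm (x ∘ e.symm)) := by
        rw [hammingNorm_comp_equiv e.symm x]
        exact hx
      have hdisteq : ∀ s : Fin m → ZMod 2,
          hammingDist x (g s) = hammingDist (x ∘ e.symm) (pw s) := by
        intro s
        have hx2 : x = (x ∘ e.symm) ∘ e := by funext i; simp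
        conv_lhs => rw [hx2]
        exact hammingDist_comp_equiv e (x ∘ e.symm) (pw s)
      have key := pw_count (x ∘ e.symm) hxe
      rw [Finset.filter_image, Finset.filter_image,
        Finset.card_image_of_injective _ hginj, Finset.card_image_of_injective _ hginj,
        Finset.filter_filter, Finset.filter_filter]
      simp only [hdisteq]
      exact key
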